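/- Suppose q is an odd prime power and n is an even positive integer. Let u ∈ F_{q^n} be nonzero such that N(u) is not a square in F_q^×, where N is the norm of F_{q^n}/F_q. Then the bilinear form ⟨x,y⟩_u = Tr(u x y) on F_{q^n} admits an orthonormal basis: there exists an F_q-basis x_1, …, x_n of F_{q^n} with Tr(u x_i x_j) = δ_{ij} (Kronecker delta) for all 1 ≤ i, j ≤ n. -/

import Mathlib

set_option linter.unusedSectionVars false
set_option maxHeartbeats 1600000
open Polynomial Finset

/-- The trace map of `F_{q^n}/F_q`, written explicitly as
`Tr(x) = x + x^q + ⋯ + x^{q^{n-1}}` (valued in the big field). -/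
def qTr {K : Type*} [CommRing K] (q n : ℕ) (x : K) : K :=
  ∑ i ∈ Finset.range n, x ^ q ^ i


namespace OrthoAux

variable {F K : Type*} [Field F] [Fintype F] [Field K] [Fintype K] [Algebra F K]

/-- There is a ring hom `K →+* K` given by `x ↦ x ^ |F|`. -/
lemma exists_frobHom (F K : Type*) [Field F] [Fintype F] [Field K] [Fintype K] [Algebra F K] :
    ∃ φ : K →+* K, ∀ x : K, φ x = x ^ Fintype.card F := by
  set p := ringChar F with hp
  haveI : CharP F p := ringChar.charP F
  haveI hprime : Fact p.Prime := ⟨CharP.char_is_prime F p⟩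
  haveI : CharP K p := charP_of_injective_algebraMap (algebraMap F K).injective p
  obtain ⟨m, -, hcard⟩ := FiniteField.card F p
  refine ⟨frobenius K p ^ (m : ℕ), fun x => ?_⟩
  rw [RingHom.coe_pow, iterate_frobenius, hcard]

lemma algebraMap_pow_card (a : F) :
    (algebraMap F K a) ^ Fintype.card F = algebraMap F K a := by
  rw [← map_pow, FiniteField.pow_card]

/-- fixed points of `x ↦ x^|F|` lie in the image of `F`. -/
lemma mem_range_of_pow_card_eq {x : K} (hx : x ^ Fintype.card F = x) :
    ∃ a : F, algebraMap F K a = x := by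
  classical
  set q := Fintype.card F with hq
  have hq2 : 1 < q := Fintype.one_lt_card
  set P : K[X] := X ^ q - X with hP
  have hdeg : P.natDegree = q := FiniteField.X_pow_card_sub_X_natDegree_eq K hq2
  have hP0 : P ≠ 0 := by
    intro h; rw [h, natDegree_zero] at hdeg; omega
  have hroot : ∀ y : K, y ^ q = y → P.IsRoot y := by
    intro y hy; simp [hP, IsRoot, hy]
  set T : Finset K := Finset.univ.image (algebraMap F K) with hT
  by_contra hcon
  push_neg at hcon
  have hxT : x ∉ T := by
    intro hmem
    obtain ⟨a, -, ha⟩ := Finset.mem_image.mp hmem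
    exact hcon a ha
  have hsub : insert x T ⊆ P.roots.toFinset := by
    intro y hy
    rw [Multiset.mem_toFinset, mem_roots hP0]
    rcases Finset.mem_insert.mp hy with h | h
    · exact h ▸ hroot x hx
    · obtain ⟨a, -, ha⟩ := Finset.mem_image.mp h
      exact hroot y (by rw [← ha]; exact algebraMap_pow_card a)
  have hcardT : T.card = q := by
    rw [hT, Finset.card_image_of_injective _ (algebraMap F K).injective, Finset.card_univ]
  have h1 : (insert x T).card = q + 1 := by
    rw [Finset.card_insert_of_notMem hxT, hcardT]
  have h2 : P.roots.toFinset.card ≤ q := by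
    calc P.roots.toFinset.card ≤ Multiset.card P.roots := Multiset.toFinset_card_le _
    _ ≤ P.natDegree := card_roots' P
    _ = q := hdeg
  have := Finset.card_le_card hsub
  omega

end OrthoAux


namespace OrthoAux

variable {F K : Type*} [Field F] [Fintype F] [Field K] [Fintype K] [Algebra F K]

lemma pow_pow_eq {φ : K →+* K} (hφ : ∀ x : K, φ x = x ^ Fintype.card F)
    (x : K) (i : ℕ) : x ^ Fintype.card F ^ i = (φ ^ i) x := by
  induction i with
  | zero => simp
  | succ i ih =>
    rw [pow_succ, pow_mul, ← hφ, ih, pow_succ']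
    rfl

lemma qTr_add {φ : K →+* K} (hφ : ∀ x : K, φ x = x ^ Fintype.card F) (n : ℕ) (x y : K) :
    qTr (Fintype.card F) n (x + y)
      = qTr (Fintype.card F) n x + qTr (Fintype.card F) n y := by
  simp only [qTr, pow_pow_eq hφ, map_add, Finset.sum_add_distrib]

lemma algebraMap_pow_card_pow (a : F) (i : ℕ) :
    (algebraMap F K a) ^ Fintype.card F ^ i = algebraMap F K a := by
  induction i with
  | zero => simp
  | succ i ih => rw [pow_succ, pow_mul, ih, ← map_pow, FiniteField.pow_card]

lemma qTr_algebraMap_mul (n : ℕ) (c : F) (x : K) :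
    qTr (Fintype.card F) n (algebraMap F K c * x)
      = algebraMap F K c * qTr (Fintype.card F) n x := by
  simp only [qTr, mul_pow, algebraMap_pow_card_pow, Finset.mul_sum]

lemma qTr_pow_card {n : ℕ} (hK : Fintype.card K = Fintype.card F ^ n)
    {φ : K →+* K} (hφ : ∀ x : K, φ x = x ^ Fintype.card F) (x : K) :
    (qTr (Fintype.card F) n x) ^ Fintype.card F = qTr (Fintype.card F) n x := by
  cases n with
  | zero => simp [qTr]
  | succ m =>
    rw [← hφ, qTr, map_sum]
    have h1 : ∀ i : ℕ, φ (x ^ Fintype.card F ^ i) = x ^ Fintype.card F ^ (i + 1) := by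
      intro i
      rw [pow_pow_eq hφ, pow_pow_eq hφ, pow_succ', RingHom.mul_def, RingHom.comp_apply]
    calc ∑ i ∈ Finset.range (m + 1), φ (x ^ Fintype.card F ^ i)
        = ∑ i ∈ Finset.range (m + 1), x ^ Fintype.card F ^ (i + 1) := by
          exact Finset.sum_congr rfl fun i _ => h1 i
      _ = ∑ i ∈ Finset.range m, x ^ Fintype.card F ^ (i + 1)
            + x ^ Fintype.card F ^ (m + 1) := Finset.sum_range_succ _ m
      _ = ∑ i ∈ Finset.range m, x ^ Fintype.card F ^ (i + 1)
            + x ^ Fintype.card F ^ 0 := by rw [← hK, FiniteField.pow_card, pow_zero, pow_one]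
      _ = qTr (Fintype.card F) (m + 1) x := by rw [qTr, Finset.sum_range_succ' (fun i => x ^ Fintype.card F ^ i) m]

/-- qTr is nonzero somewhere. -/
lemma exists_qTr_ne_zero {n : ℕ} (hn0 : 0 < n)
    (hK : Fintype.card K = Fintype.card F ^ n) :
    ∃ x : K, qTr (Fintype.card F) n x ≠ 0 := by
  classical
  by_contra hcon
  push_neg at hcon
  set q := Fintype.card F with hq
  have hq2 : 1 < q := Fintype.one_lt_card
  set P : K[X] := ∑ i ∈ Finset.range n, X ^ q ^ i with hP
  have heval : ∀ x : K, P.eval x = qTr q n x := by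
    intro x; simp [hP, qTr, eval_finset_sum]
  have hcoeff : P.coeff (q ^ (n - 1)) = 1 := by
    rw [hP, finset_sum_coeff]
    rw [Finset.sum_eq_single (n - 1)]
    · simp
    · intro i hi hne
      rw [coeff_X_pow, if_neg]
      exact fun h => hne (Nat.pow_right_injective hq2 h.symm)
    · intro h; exact absurd (Finset.mem_range.mpr (by omega)) h
  have hP0 : P ≠ 0 := fun h => by simp [h] at hcoeff
  have hdeg : P.natDegree ≤ q ^ (n - 1) := by
    apply Polynomial.natDegree_sum_le_of_forall_le
    intro i hi
    rw [natDegree_X_pow]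
    exact Nat.pow_le_pow_right (le_of_lt hq2) (by
      have := Finset.mem_range.mp hi; omega)
  have hsub : (Finset.univ : Finset K) ⊆ P.roots.toFinset := by
    intro y _
    rw [Multiset.mem_toFinset, mem_roots hP0]
    rw [IsRoot, heval]; exact hcon y
  have : Fintype.card K ≤ q ^ (n - 1) := by
    calc Fintype.card K = (Finset.univ : Finset K).card := (Finset.card_univ).symm
      _ ≤ P.roots.toFinset.card := Finset.card_le_card hsub
      _ ≤ Multiset.card P.roots := Multiset.toFinset_card_le _
      _ ≤ P.natDegree := card_roots' P
      _ ≤ q ^ (n - 1) := hdeg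
  rw [hK] at this
  have := Nat.pow_lt_pow_right hq2 (show n - 1 < n by omega)
  omega

end OrthoAux

namespace OrthoAux

variable {F V : Type*} [Field F] [Fintype F] [AddCommGroup V] [Module F V]

lemma ortho_normalize (hodd : Fintype.card F % 2 = 1) :
    ∀ (t m : ℕ) (B : LinearMap.BilinForm F V) (b : Module.Basis (Fin m) F V),
      B.iIsOrtho ⇑b → (∀ i, B (b i) (b i) ≠ 0) → IsSquare (∏ i, B (b i) (b i)) →
      (∀ i : Fin m, t ≤ (i : ℕ) → B (b i) (b i) = 1) →
      ∃ c : Module.Basis (Fin m) F V, ∀ i j, B (c i) (c j) = if i = j then 1 else 0 := by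
  intro t
  induction t with
  | zero =>
    intro m B b horth hne hsq hnorm
    refine ⟨b, fun i j => ?_⟩
    by_cases h : i = j
    · subst h; rw [if_pos rfl]; exact hnorm i (Nat.zero_le _)
    · rw [if_neg h]; exact horth h
  | succ t ih =>
    intro m B b horth hne hsq hnorm
    have horth' : ∀ a c : Fin m, a ≠ c → B (b a) (b c) = 0 := fun a c h =>
      LinearMap.BilinForm.iIsOrtho_def.mp horth a c h
    by_cases hmt : m ≤ t
    · exact ih m B b horth hne hsq (fun i hi => absurd i.isLt (by omega))
    push_neg at hmt   -- t < m
    cases t with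
    | zero =>
      -- only index 0 possibly unnormalized; product is d 0, a square
      obtain ⟨m', rfl⟩ : ∃ m', m = m' + 1 := ⟨m - 1, by omega⟩
      have hprod : ∏ i, B (b i) (b i) = B (b 0) (b 0) := by
        rw [Fin.prod_univ_succ]
        have : ∀ i : Fin m', B (b i.succ) (b i.succ) = 1 := fun i =>
          hnorm i.succ (by simp [Fin.val_succ])
        simp [this]
      rw [hprod] at hsq
      obtain ⟨e, he⟩ := hsq
      have he0 : e ≠ 0 := by
        intro h; rw [h, mul_zero] at he; exact hne 0 he
      set w : Fin (m' + 1) → Fˣ := fun k => if k = 0 then (Units.mk0 e he0)⁻¹ else 1 with hw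
      refine ⟨b.unitsSMul w, fun i j => ?_⟩
      rw [Module.Basis.unitsSMul_apply, Module.Basis.unitsSMul_apply, Units.smul_def, Units.smul_def]
      simp only [map_smul, LinearMap.smul_apply, smul_eq_mul]
      by_cases h : i = j
      · subst h
        rw [if_pos rfl]
        by_cases h0 : i = 0
        · subst h0
          simp only [hw, if_pos rfl, ← he]
          rw [Units.val_inv_eq_inv_val, Units.val_mk0]
          field_simp
          linear_combination he
        · simp only [hw, if_neg h0, Units.val_one, one_mul]
          refine hnorm i ?_
          have : (i : ℕ) ≠ 0 := fun h => h0 (Fin.ext (by simp [h]))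
          omega
      · rw [if_neg h, horth' i j h, mul_zero, mul_zero]
    | succ t' =>
      -- m ≥ t' + 2 ; do the 2-dim move on indices (t', t'+1)
      set i0 : Fin m := ⟨t', by omega⟩ with hi0
      set j0 : Fin m := ⟨t' + 1, by omega⟩ with hj0
      have hij : i0 ≠ j0 := by simp [hi0, hj0, Fin.ext_iff]
      set dI := B (b i0) (b i0) with hdI
      set dJ := B (b j0) (b j0) with hdJ
      have hdI0 : dI ≠ 0 := hne i0
      have hdJ0 : dJ ≠ 0 := hne j0
      obtain ⟨x, y, hxy⟩ : ∃ x y : F, dI * x ^ 2 + dJ * y ^ 2 = 1 := by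
        obtain ⟨x, y, h⟩ := FiniteField.exists_root_sum_quadratic
          (f := C dI * X ^ 2 - C 1) (g := C dJ * X ^ 2)
          (by
            rw [degree_sub_eq_left_of_degree_lt]
            · exact degree_C_mul_X_pow 2 hdI0
            · rw [degree_C_mul_X_pow 2 hdI0, degree_C one_ne_zero]; norm_num)
          (degree_C_mul_X_pow 2 hdJ0) hodd
        refine ⟨x, y, ?_⟩
        simp only [eval_sub, eval_mul, eval_pow, eval_C, eval_X, eval_one] at h
        linear_combination h
      set cfam : Fin m → V := fun k =>
        if k = i0 then (dJ * y) • b i0 - (dI * x) • b j0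
        else if k = j0 then x • b i0 + y • b j0
        else b k with hcfam
      set newd : Fin m → F := fun k => if k = i0 then dI * dJ else if k = j0 then 1 else
        B (b k) (b k) with hnewd
      have horthIJ : B (b i0) (b j0) = 0 := horth' i0 j0 hij
      have horthJI : B (b j0) (b i0) = 0 := horth' j0 i0 (Ne.symm hij)
      have cfam_i : cfam i0 = (dJ * y) • b i0 - (dI * x) • b j0 := by
        simp only [hcfam, eq_self_iff_true, if_true]
      have cfam_j : cfam j0 = x • b i0 + y • b j0 := by
        simp only [hcfam, if_neg (Ne.symm hij), eq_self_iff_true, if_true]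
      have cfam_o : ∀ k, k ≠ i0 → k ≠ j0 → cfam k = b k := by
        intro k h1 h2; simp only [hcfam, if_neg h1, if_neg h2]
      have newd_i : newd i0 = dI * dJ := by simp only [hnewd, eq_self_iff_true, if_true]
      have newd_j : newd j0 = 1 := by simp only [hnewd, if_neg (Ne.symm hij), eq_self_iff_true, if_true]
      have newd_o : ∀ k, k ≠ i0 → k ≠ j0 → newd k = B (b k) (b k) := by
        intro k h1 h2; simp only [hnewd, if_neg h1, if_neg h2]
      have hval : ∀ k l, B (cfam k) (cfam l) = if k = l then newd k else 0 := by
        intro k l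
        rcases eq_or_ne k i0 with hk | hk
        · subst hk
          rcases eq_or_ne l i0 with hl | hl
          · subst hl
            rw [if_pos rfl, newd_i, cfam_i]
            simp only [map_sub, map_smul, LinearMap.sub_apply, LinearMap.smul_apply,
              smul_eq_mul, horthIJ, horthJI, ← hdI, ← hdJ]
            linear_combination (dI * dJ) * hxy
          · rw [if_neg (Ne.symm hl), cfam_i]
            rcases eq_or_ne l j0 with hl' | hl'
            · subst hl'
              rw [cfam_j]
              simp only [map_sub, map_add, map_smul, LinearMap.sub_apply,
                LinearMap.add_apply, LinearMap.smul_apply, smul_eq_mul,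
                horthIJ, horthJI, ← hdI, ← hdJ]
              ring
            · rw [cfam_o l hl hl']
              simp only [map_sub, map_smul, LinearMap.sub_apply, LinearMap.smul_apply,
                smul_eq_mul, horth' i0 l (Ne.symm hl), horth' j0 l (Ne.symm hl')]
              ring
        · rcases eq_or_ne k j0 with hk' | hk'
          · subst hk'
            rcases eq_or_ne l j0 with hl | hl
            · subst hl
              rw [if_pos rfl, newd_j, cfam_j]
              simp only [map_add, map_smul, LinearMap.add_apply, LinearMap.smul_apply,
                smul_eq_mul, horthIJ, horthJI, ← hdI, ← hdJ]
              linear_combination hxy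
            · rw [if_neg (Ne.symm hl), cfam_j]
              rcases eq_or_ne l i0 with hl' | hl'
              · subst hl'
                rw [cfam_i]
                simp only [map_sub, map_add, map_smul, LinearMap.sub_apply,
                  LinearMap.add_apply, LinearMap.smul_apply, smul_eq_mul,
                  horthIJ, horthJI, ← hdI, ← hdJ]
                ring
              · rw [cfam_o l hl' hl]
                simp only [map_add, map_smul, LinearMap.add_apply, LinearMap.smul_apply,
                  smul_eq_mul, horth' i0 l (Ne.symm hl'),
                  horth' j0 l (Ne.symm hl)]
                ring
          · rw [cfam_o k hk hk']
            rcases eq_or_ne l i0 with hl | hl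
            · subst hl
              rw [if_neg hk, cfam_i]
              simp only [map_sub, map_smul, LinearMap.smul_apply, smul_eq_mul,
                horth' k i0 hk, horth' k j0 hk', map_smul]
              ring
            · rcases eq_or_ne l j0 with hl' | hl'
              · subst hl'
                rw [if_neg hk', cfam_j]
                simp only [map_add, map_smul, smul_eq_mul,
                  horth' k i0 hk, horth' k j0 hk']
                ring
              · rw [cfam_o l hl hl']
                rcases eq_or_ne k l with he | he
                · subst he
                  rw [if_pos rfl, newd_o k hk hk']
                · rw [if_neg he]
                  exact horth' k l he
      -- new family is a basis
      have hne' : ∀ k, B (cfam k) (cfam k) ≠ 0 := by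
        intro k
        rw [hval k k, if_pos rfl]
        rcases eq_or_ne k i0 with h | h
        · subst h; rw [newd_i]; exact mul_ne_zero hdI0 hdJ0
        rcases eq_or_ne k j0 with h' | h'
        · subst h'; rw [newd_j]; exact one_ne_zero
        · rw [newd_o k h h']; exact hne k
      have horthc : B.iIsOrtho cfam := by
        rw [LinearMap.BilinForm.iIsOrtho_def]
        intro k l h
        rw [hval k l, if_neg h]
      have hli : LinearIndependent F cfam :=
        LinearMap.BilinForm.linearIndependent_of_iIsOrtho horthc
          (fun k h => hne' k h)
      haveI : Nonempty (Fin m) := ⟨i0⟩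
      have hcard : Fintype.card (Fin m) = Module.finrank F V := by
        rw [Fintype.card_fin, Module.finrank_eq_card_basis b, Fintype.card_fin]
      set c' : Module.Basis (Fin m) F V := basisOfLinearIndependentOfCardEqFinrank hli hcard with hc'
      have hc'coe : ⇑c' = cfam := coe_basisOfLinearIndependentOfCardEqFinrank hli hcard
      -- product preserved
      have hprod : ∏ k, newd k = ∏ k, B (b k) (b k) := by
        have h1 : newd = Function.update (Function.update (fun k => B (b k) (b k)) j0 1)
            i0 (dI * dJ) := by
          funext k
          rcases eq_or_ne k i0 with h | h
          · subst h; rw [Function.update_self, newd_i]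
          rcases eq_or_ne k j0 with h' | h'
          · subst h'; rw [Function.update_of_ne h, Function.update_self, newd_j]
          · rw [Function.update_of_ne h, Function.update_of_ne h', newd_o k h h']
        clear h1
        have key : ∀ f : Fin m → F, ∏ k, f k
            = f i0 * (f j0 * ∏ k ∈ (Finset.univ.erase i0).erase j0, f k) := by
          intro f
          rw [← Finset.mul_prod_erase Finset.univ f (Finset.mem_univ i0),
            ← Finset.mul_prod_erase _ f
              (Finset.mem_erase.mpr ⟨Ne.symm hij, Finset.mem_univ j0⟩)]
        rw [key newd, key (fun k => B (b k) (b k))]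
        have heq : ∏ k ∈ (Finset.univ.erase i0).erase j0, newd k
            = ∏ k ∈ (Finset.univ.erase i0).erase j0, B (b k) (b k) := by
          refine Finset.prod_congr rfl fun k hk => ?_
          have hkj : k ≠ j0 := (Finset.mem_erase.mp hk).1
          have hki : k ≠ i0 := (Finset.mem_erase.mp (Finset.mem_erase.mp hk).2).1
          exact newd_o k hki hkj
        rw [heq, newd_i, newd_j, ← hdI, ← hdJ]
        ring
      refine ih m B c' ?_ ?_ ?_ ?_
      · rw [hc'coe]; exact horthc
      · intro k; rw [hc'coe]; exact hne' k
      · rw [hc'coe]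
        have : ∏ k, B (cfam k) (cfam k) = ∏ k, newd k := by
          apply Finset.prod_congr rfl
          intro k _; rw [hval k k, if_pos rfl]
        rw [this, hprod]; exact hsq
      · intro k hk
        rw [hc'coe]
        rw [hval k k, if_pos rfl]
        have hki : k ≠ i0 := by
          intro h
          have hv : (k : ℕ) = t' := by rw [h]
          omega
        rcases eq_or_ne k j0 with h' | h'
        · subst h'; exact newd_j
        · rw [newd_o k hki h']
          apply hnorm
          have : (k : ℕ) ≠ t' + 1 := by
            intro h; exact h' (Fin.ext h)
          omega

end OrthoAux


namespace OrthoAux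

lemma isSquare_mul_of_not_isSquare {F : Type*} [Field F] [Fintype F] {a b : F}
    (ha : a ≠ 0) (hb : b ≠ 0) (hna : ¬IsSquare a) (hnb : ¬IsSquare b) :
    IsSquare (a * b) := by
  classical
  have h1 : quadraticChar F a = -1 := quadraticChar_neg_one_iff_not_isSquare.mpr hna
  have h2 : quadraticChar F b = -1 := quadraticChar_neg_one_iff_not_isSquare.mpr hnb
  have : quadraticChar F (a * b) = 1 := by
    rw [map_mul, h1, h2]; ring
  exact (quadraticChar_one_iff_isSquare (mul_ne_zero ha hb)).mp this

end OrthoAux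



/-- For `q` odd, `n` even and `u ∈ F_{q^n}` nonzero whose norm
`N(u) = ∏_{i<n} u^{q^i}` is a non-square of `F_q`, the bilinear form
`⟨x,y⟩_u = Tr(uxy)` admits an orthonormal basis. -/
theorem exists_orthonormal_basis_of_norm_nonsquare
    {F K : Type*} [Field F] [Fintype F] [Field K] [Fintype K] [Algebra F K]
    {n : ℕ} (hq : Odd (Fintype.card F)) (hn : Module.finrank F K = n)
    (hne : Even n) (hn0 : 0 < n)
    (u : K) (hu : u ≠ 0)
    (v : F) (hv : algebraMap F K v = ∏ i ∈ Finset.range n, u ^ Fintype.card F ^ i)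
    (hvns : ¬ IsSquare v) :
    ∃ b : Module.Basis (Fin n) F K, ∀ i j : Fin n,
      qTr (Fintype.card F) n (u * b i * b j) = if i = j then 1 else 0 := by
  classical
  set q := Fintype.card F with hqdef
  have hodd : q % 2 = 1 := Nat.odd_iff.mp hq
  have hinj : Function.Injective (algebraMap F K) := (algebraMap F K).injective
  -- char ≠ 2
  have h2F : (2 : F) ≠ 0 := by
    intro h2
    set p := ringChar F with hp
    haveI : CharP F p := ringChar.charP F
    haveI hprime : Fact p.Prime := ⟨CharP.char_is_prime F p⟩
    have hpd : p ∣ 2 := (CharP.cast_eq_zero_iff F p 2).mp (by exact_mod_cast h2)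
    have hp2 : p = 2 := (Nat.prime_dvd_prime_iff_eq hprime.1 Nat.prime_two).mp hpd
    obtain ⟨m, -, hcard⟩ := FiniteField.card F p
    rw [← hqdef, hp2] at hcard
    have hm : 0 < (m : ℕ) := m.2
    have : q % 2 = 0 := by
      rw [hcard]
      simp [Nat.pow_mod, Nat.pos_iff_ne_zero.mp hm]
    omega
  haveI : Invertible (2 : F) := invertibleOfNonzero h2F
  haveI : FiniteDimensional F K := by infer_instance
  have hcardK : Fintype.card K = q ^ n := by
    have b0 : Module.Basis (Fin n) F K := (Module.finBasis F K).reindex (finCongr hn)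
    rw [Module.card_fintype b0, Fintype.card_fin]
  obtain ⟨φ, hφ⟩ := OrthoAux.exists_frobHom F K
  -- the F-valued trace-like map
  have htau : ∀ z : K, ∃ a : F, algebraMap F K a = qTr q n z := fun z =>
    OrthoAux.mem_range_of_pow_card_eq (OrthoAux.qTr_pow_card hcardK hφ z)
  choose τ hτ using htau
  -- bilinear form
  set B : LinearMap.BilinForm F K := LinearMap.mk₂ F (fun x y => τ (u * x * y))
    (fun x x' y => by
      apply hinj
      rw [map_add, hτ, hτ, hτ, show u * (x + x') * y = u * x * y + u * x' * y by ring,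
        OrthoAux.qTr_add hφ])
    (fun c x y => by
      apply hinj
      rw [smul_eq_mul, map_mul, hτ, hτ,
        show u * (c • x) * y = algebraMap F K c * (u * x * y) by
          rw [Algebra.smul_def]; ring,
        OrthoAux.qTr_algebraMap_mul])
    (fun x y y' => by
      apply hinj
      rw [map_add, hτ, hτ, hτ, show u * x * (y + y') = u * x * y + u * x * y' by ring,
        OrthoAux.qTr_add hφ])
    (fun c x y => by
      apply hinj
      rw [smul_eq_mul, map_mul, hτ, hτ,
        show u * x * (c • y) = algebraMap F K c * (u * x * y) by
          rw [Algebra.smul_def]; ring,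
        OrthoAux.qTr_algebraMap_mul]) with hB
  have hBapp : ∀ x y : K, B x y = τ (u * x * y) := fun x y => rfl
  have hBsymm : B.IsSymm := by
    refine LinearMap.BilinForm.isSymm_def.mpr fun x y => ?_
    rw [hBapp, hBapp, show u * x * y = u * y * x by ring]
  have hBnd : B.Nondegenerate := by
    refine (LinearMap.IsRefl.nondegenerate_iff_separatingLeft
      (LinearMap.BilinForm.isSymm_iff.mp hBsymm).isRefl).mpr ?_
    intro x hx
    by_contra hx0
    obtain ⟨x0, hx0ne⟩ := OrthoAux.exists_qTr_ne_zero hn0 hcardK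
    have hux : u * x ≠ 0 := mul_ne_zero hu hx0
    have := hx ((u * x)⁻¹ * x0)
    rw [hBapp, show u * x * ((u * x)⁻¹ * x0) = x0 by field_simp] at this
    apply hx0ne
    rw [← hτ x0, this, map_zero]
  -- orthogonal basis
  obtain ⟨b1, hb1⟩ := LinearMap.BilinForm.exists_orthogonal_basis (LinearMap.BilinForm.isSymm_iff.mp hBsymm) (B := B)
  set b : Module.Basis (Fin n) F K := b1.reindex (finCongr hn) with hbdef
  have horth : B.iIsOrtho ⇑b := by
    rw [LinearMap.BilinForm.iIsOrtho_def]
    intro i j hij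
    rw [hbdef, Module.Basis.coe_reindex]
    exact LinearMap.BilinForm.iIsOrtho_def.mp hb1 _ _
      (fun h => hij (by simpa using congrArg (finCongr hn) h))
  have hne' : ∀ i, B (b i) (b i) ≠ 0 := fun i =>
    LinearMap.BilinForm.iIsOrtho.not_isOrtho_basis_self_of_nondegenerate horth hBnd i
  -- Gram determinant computation
  set d : Fin n → F := fun i => B (b i) (b i) with hd
  set Vm : Matrix (Fin n) (Fin n) K := Matrix.of (fun k i : Fin n => (b i : K) ^ q ^ (k : ℕ))
    with hVm
  set w : K := Vm.det with hw
  set G : Matrix (Fin n) (Fin n) F := Matrix.of (fun i j => B (b i) (b j)) with hG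
  have hGdiag : G = Matrix.diagonal d := by
    ext i j
    rcases eq_or_ne i j with h | h
    · subst h
      simp only [hG, Matrix.of_apply, Matrix.diagonal_apply_eq, hd]
    · rw [Matrix.diagonal_apply_ne _ h]
      simp only [hG, Matrix.of_apply]
      exact LinearMap.BilinForm.iIsOrtho_def.mp horth i j h
  have hdetG : G.det = ∏ i, d i := by rw [hGdiag, Matrix.det_diagonal]
  set D : Matrix (Fin n) (Fin n) K := Matrix.diagonal (fun k : Fin n => u ^ q ^ (k : ℕ)) with hD
  have hG'mat : (algebraMap F K).mapMatrix G = Vm.transpose * (D * Vm) := by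
    ext i j
    rw [RingHom.mapMatrix_apply, Matrix.map_apply]
    have hL : algebraMap F K (G i j) = qTr q n (u * b i * b j) := by
      simp only [hG, Matrix.of_apply, hBapp]
      exact hτ _
    rw [hL, Matrix.mul_apply]
    have hterm : ∀ k : Fin n, Vm.transpose i k * (D * Vm) k j = (u * b i * b j) ^ q ^ (k : ℕ) := by
      intro k
      rw [Matrix.transpose_apply, hD, Matrix.diagonal_mul]
      simp only [hVm, Matrix.of_apply]
      rw [mul_pow, mul_pow]
      ring
    rw [Finset.sum_congr rfl (fun k _ => hterm k), qTr,
      ← Fin.sum_univ_eq_sum_range (fun k => (u * b i * b j) ^ q ^ k) n]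
  have hdet : algebraMap F K (∏ i, d i) = w * w * algebraMap F K v := by
    rw [← hdetG, RingHom.map_det, hG'mat, Matrix.det_mul, Matrix.det_mul,
      Matrix.det_transpose, hD, Matrix.det_diagonal,
      show (∏ k : Fin n, u ^ q ^ (k : ℕ)) = algebraMap F K v by
        rw [hv]; exact Fin.prod_univ_eq_prod_range (fun k => u ^ q ^ k) n]
    ring
  have hprodne : (∏ i, d i) ≠ 0 := Finset.prod_ne_zero_iff.mpr (fun i _ => hne' i)
  have hw0 : w ≠ 0 := by
    intro h
    apply hprodne
    apply hinj
    rw [map_zero, hdet, h]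
    ring
  obtain ⟨n', rfl⟩ : ∃ n', n = n' + 1 := ⟨n - 1, by omega⟩
  have hrot : Vm.map ⇑φ = Vm.submatrix (⇑(finRotate (n' + 1))) id := by
    ext k i
    rw [Matrix.map_apply, Matrix.submatrix_apply, id_eq]
    simp only [hVm, Matrix.of_apply, hφ]
    rw [← pow_mul, ← pow_succ]
    rcases eq_or_ne k (Fin.last n') with hk | hk
    · subst hk
      rw [finRotate_succ_apply, Fin.val_add_one, if_pos rfl]
      simp only [Fin.val_last, pow_zero, pow_one]
      rw [← hcardK]
      exact FiniteField.pow_card (b i : K)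
    · rw [finRotate_succ_apply, Fin.val_add_one, if_neg hk]
  have hwq : w ^ q = -w := by
    have h1 : w ^ q = φ w := (hφ w).symm
    have h2 : φ w = (Vm.map ⇑φ).det := by
      rw [hw, RingHom.map_det, RingHom.mapMatrix_apply]
    have hodd' : Odd n' := by
      rcases Nat.even_add_one.mp hne with h
      exact Nat.not_even_iff_odd.mp h
    rw [h1, h2, hrot, Matrix.det_permute, sign_finRotate, Nat.add_sub_cancel, Odd.neg_one_pow hodd']
    simp only [Units.val_neg, Units.val_one, Int.cast_neg, Int.cast_one]
    rw [neg_one_mul]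
  obtain ⟨s, hs⟩ : ∃ s : F, algebraMap F K s = w * w := by
    apply OrthoAux.mem_range_of_pow_card_eq
    rw [show (w * w) ^ q = w ^ q * w ^ q by ring, hwq]
    ring
  have hs0 : s ≠ 0 := by
    intro h
    rw [h, map_zero] at hs
    exact hw0 (mul_self_eq_zero.mp hs.symm)
  have h2K : (2 : K) ≠ 0 := by
    intro h
    apply h2F
    apply hinj
    rw [map_ofNat, map_zero]
    exact h
  have hsns : ¬ IsSquare s := by
    rintro ⟨t, rfl⟩
    set a : K := algebraMap F K t with ha
    have haa : w * w = a * a := by rw [← hs, map_mul]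
    have hcases : w = a ∨ w = -a := mul_self_eq_mul_self_iff.mp haa
    have hfix : w ^ q = w := by
      rcases hcases with h | h
      · rw [h, ha]
        exact OrthoAux.algebraMap_pow_card t
      · rw [h, Odd.neg_pow hq, ha, OrthoAux.algebraMap_pow_card t]
    rw [hwq] at hfix
    apply hw0
    have : (2 : K) * w = 0 := by linear_combination (-1 : K) * hfix
    rcases mul_eq_zero.mp this with h | h
    · exact absurd h h2K
    · exact h
  have hprodsq : IsSquare (∏ i, d i) := by
    have hveq : (∏ i, d i) = s * v := by
      apply hinj
      rw [hdet, map_mul, hs]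
    rw [hveq]
    have hv0 : v ≠ 0 := by
      intro h
      rw [h, map_zero] at hv
      exact (Finset.prod_ne_zero_iff.mpr (fun i _ => pow_ne_zero _ hu)) hv.symm
    exact OrthoAux.isSquare_mul_of_not_isSquare hs0 hv0 hsns hvns
  obtain ⟨c, hc⟩ := OrthoAux.ortho_normalize hodd (n' + 1) (n' + 1) B b horth hne' hprodsq
    (fun i hi => absurd i.isLt (by omega))
  refine ⟨c, fun i j => ?_⟩
  rw [← hτ (u * c i * c j), ← hBapp, hc i j, apply_ite (algebraMap F K), map_one, map_zero]
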